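/- Let n ≥ 2, let c₂, …, c_n ∈ ℝ and c' ∈ ℝ, and define F : ℂⁿ → ℝⁿ by F_j(w) = |w_j|² − |w₁|² for j = 2, …, n, and F₁(w) = Re(w₁·w₂⋯w_n) if n is even and F₁(w) = Im(w₁·w₂⋯w_n) if n is odd. Let w ∈ ℂⁿ be a point with F(w) = (c', c₂, …, c_n) at which the (real) Fréchet derivative dF_w : ℂⁿ → ℝⁿ is surjective. Then the kernel V = ker(dF_w), which is an n-dimensional real subspace of ℂⁿ, is isotropic for the standard symplectic form of ℂⁿ: for all u, v ∈ V one has ω(u, v) = Σ_{k=1}^{n} Im(conj(u_k)·v_k) = 0. In particular the level set {w : F(w) = (c', c₂, …, c_n)} is a Lagrangian submanifold of ℂⁿ near any such point. -/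

import Mathlib

open Complex Finset

/-- Bilinearity of the symplectic pairing in the first argument. -/
lemma symp_sum {n : ℕ} (a : Fin n → ℝ) (X : Fin n → Fin n → ℂ) (v : Fin n → ℂ) :
    (∑ k, ((starRingEnd ℂ) ((∑ j, a j • X j) k) * v k).im)
      = ∑ j, a j * ∑ k, ((starRingEnd ℂ) (X j k) * v k).im := by
  have h : ∀ k, ((starRingEnd ℂ) ((∑ j, a j • X j) k) * v k).im
      = ∑ j, a j * ((starRingEnd ℂ) (X j k) * v k).im := by
    intro k
    simp only [Finset.sum_apply, Pi.smul_apply, map_sum, Finset.sum_mul, Complex.im_sum]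
    refine Finset.sum_congr rfl fun j _ => ?_
    simp [Complex.real_smul, map_mul, Complex.conj_ofReal, mul_assoc]
  rw [Finset.sum_congr rfl fun k _ => h k, Finset.sum_comm]
  simp [Finset.mul_sum]

theorem stmt_10 (n : ℕ) (hn : 2 ≤ n) (c : Fin n → ℝ)
    (F : (Fin n → ℂ) → (Fin n → ℝ))
    (hF : F = fun w j =>
      if j = (⟨0, by omega⟩ : Fin n) then
        (if Even n then (∏ k, w k).re else (∏ k, w k).im)
      else Complex.normSq (w j) - Complex.normSq (w ⟨0, by omega⟩))
    (w : Fin n → ℂ) (hw : F w = c)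
    (hsurj : Function.Surjective (fderiv ℝ F w)) :
    Module.finrank ℝ (LinearMap.ker (fderiv ℝ F w : (Fin n → ℂ) →ₗ[ℝ] (Fin n → ℝ))) = n
    ∧ ∀ u v : Fin n → ℂ, fderiv ℝ F w u = 0 → fderiv ℝ F w v = 0 →
        ∑ k, ((starRingEnd ℂ) (u k) * v k).im = 0 := by
  classical
  set e0 : Fin n := ⟨0, by omega⟩ with he0
  set Q : Fin n → ℂ := fun k => ∏ l ∈ Finset.univ.erase k, w l with hQdef
  set P : ℂ := ∏ l, w l with hPdef
  have hQP : ∀ k, Q k * w k = P := fun k =>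
    Finset.prod_erase_mul _ _ (Finset.mem_univ k)
  -- the explicit derivative
  set L : Fin n → ((Fin n → ℂ) →L[ℝ] ℝ) := fun j =>
    if j = e0 then
      (if Even n then Complex.reCLM else Complex.imCLM).comp
        (∑ k, Q k • (ContinuousLinearMap.proj k : (Fin n → ℂ) →L[ℝ] ℂ))
    else
      ((2*(w j).re) • (Complex.reCLM.comp (ContinuousLinearMap.proj j))
        + (2*(w j).im) • (Complex.imCLM.comp (ContinuousLinearMap.proj j)))
      - ((2*(w e0).re) • (Complex.reCLM.comp (ContinuousLinearMap.proj e0))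
        + (2*(w e0).im) • (Complex.imCLM.comp (ContinuousLinearMap.proj e0))) with hLdef
  have hre : ∀ k, HasFDerivAt (fun x : Fin n → ℂ => (x k).re)
      (Complex.reCLM.comp (ContinuousLinearMap.proj k)) w := fun k =>
    (Complex.reCLM.hasFDerivAt).comp w (hasFDerivAt_apply k w)
  have him : ∀ k, HasFDerivAt (fun x : Fin n → ℂ => (x k).im)
      (Complex.imCLM.comp (ContinuousLinearMap.proj k)) w := fun k =>
    (Complex.imCLM.hasFDerivAt).comp w (hasFDerivAt_apply k w)
  have hnQ : ∀ k, HasFDerivAt (fun x : Fin n → ℂ => Complex.normSq (x k))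
      ((2*(w k).re) • (Complex.reCLM.comp (ContinuousLinearMap.proj k))
        + (2*(w k).im) • (Complex.imCLM.comp (ContinuousLinearMap.proj k))) w := by
    intro k
    have h : HasFDerivAt (fun x : Fin n → ℂ => (x k).re * (x k).re + (x k).im * (x k).im) _ w :=
      ((hre k).mul (hre k)).add ((him k).mul (him k))
    simp only [Complex.normSq_apply]
    refine h.congr_fderiv ?_
    ext u
    simp [ContinuousLinearMap.add_apply, ContinuousLinearMap.smul_apply, smul_eq_mul]
    ring
  have hD : HasFDerivAt F (ContinuousLinearMap.pi L) w := by
    rw [hF]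
    apply hasFDerivAt_pi''
    intro j
    rw [ContinuousLinearMap.proj_pi, hLdef]
    by_cases hj : j = e0
    · subst hj
      simp only [if_pos rfl]
      by_cases he : Even n
      · simp only [if_pos he]
        exact (Complex.reCLM.hasFDerivAt).comp w hasFDerivAt_finset_prod
      · simp only [if_neg he]
        exact (Complex.imCLM.hasFDerivAt).comp w hasFDerivAt_finset_prod
    · simp only [if_neg hj]
      exact (hnQ j).sub (hnQ e0)
  have hfd : fderiv ℝ F w = ContinuousLinearMap.pi L := hD.fderiv
  -- explicit evaluation of the derivative
  have hDval : ∀ (u : Fin n → ℂ) (j : Fin n), fderiv ℝ F w u j =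
      if j = e0 then (if Even n then (∑ k, Q k * u k).re else (∑ k, Q k * u k).im)
      else (2*(w j).re * (u j).re + 2*(w j).im * (u j).im)
        - (2*(w e0).re * (u e0).re + 2*(w e0).im * (u e0).im) := by
    intro u j
    rw [hfd]
    simp only [ContinuousLinearMap.pi_apply, hLdef]
    by_cases hj : j = e0
    · subst hj
      simp only [if_pos rfl]
      by_cases he : Even n <;>
        simp [he, ContinuousLinearMap.sum_apply, ContinuousLinearMap.smul_apply,
          smul_eq_mul, Complex.re_sum, Complex.im_sum]
    · simp only [if_neg hj, ContinuousLinearMap.sub_apply, ContinuousLinearMap.add_apply,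
        ContinuousLinearMap.smul_apply, ContinuousLinearMap.coe_comp', Function.comp_apply,
        ContinuousLinearMap.proj_apply, Complex.reCLM_apply, Complex.imCLM_apply, smul_eq_mul]
      try ring
  -- the Hamiltonian vector fields
  set X : Fin n → Fin n → ℂ := fun j k =>
    if j = e0 then (if Even n then -Complex.I else 1) * (starRingEnd ℂ) (Q k)
    else (if k = j then (-2*Complex.I) * (w j)
      else if k = e0 then (2*Complex.I) * (w e0) else 0) with hXdef
  -- X j lies in the kernel
  have hPre : ∀ k, (Q k).re * (w k).re - (Q k).im * (w k).im = P.re := fun k => by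
    rw [← hQP k]; simp [Complex.mul_re]
  have hPim : ∀ k, (Q k).re * (w k).im + (Q k).im * (w k).re = P.im := fun k => by
    rw [← hQP k]; simp [Complex.mul_im]
  have hXval1 : ∀ j, j ≠ e0 → X j j = (-2*Complex.I) * (w j) := by
    intro j hj; simp [hXdef, if_neg hj]
  have hXval2 : ∀ j, j ≠ e0 → X j e0 = (2*Complex.I) * (w e0) := by
    intro j hj; simp [hXdef, if_neg hj, if_neg (Ne.symm hj)]
  have hXval0 : ∀ j k, j ≠ e0 → k ≠ j → k ≠ e0 → X j k = 0 := by
    intro j k hj hkj hke; simp [hXdef, if_neg hj, if_neg hkj, if_neg hke]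
  have hXker : ∀ j j', fderiv ℝ F w (X j) j' = 0 := by
    intro j j'
    rw [hDval]
    by_cases hj : j = e0
    · subst hj
      by_cases hj' : j' = e0
      · subst hj'
        simp only [if_pos rfl]
        by_cases he : Even n
        · simp only [if_pos he, Complex.re_sum]
          refine Finset.sum_eq_zero fun k _ => ?_
          simp only [hXdef, if_pos rfl, if_pos he, Complex.mul_re, Complex.mul_im,
            Complex.neg_re, Complex.neg_im, Complex.I_re, Complex.I_im,
            Complex.conj_re, Complex.conj_im]
          ring
        · simp only [if_neg he, Complex.im_sum]
          refine Finset.sum_eq_zero fun k _ => ?_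
          simp only [hXdef, if_pos rfl, if_neg he, Complex.mul_re, Complex.mul_im,
            Complex.one_re, Complex.one_im, Complex.conj_re, Complex.conj_im]
          ring
      · simp only [if_neg hj']
        by_cases he : Even n
        · simp only [hXdef, if_pos rfl, if_pos he, Complex.mul_re, Complex.mul_im,
            Complex.neg_re, Complex.neg_im, Complex.I_re, Complex.I_im,
            Complex.conj_re, Complex.conj_im]
          linear_combination (-2 : ℝ) * hPim j' + 2 * hPim e0
        · simp only [hXdef, if_pos rfl, if_neg he, Complex.mul_re, Complex.mul_im,
            Complex.one_re, Complex.one_im, Complex.conj_re, Complex.conj_im]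
          linear_combination (2 : ℝ) * hPre j' - 2 * hPre e0
    · by_cases hj' : j' = e0
      · subst hj'
        simp only [if_pos rfl]
        have hsum : (∑ k, Q k * X j k) = 0 := by
          rw [Finset.sum_eq_add_of_mem j e0 (Finset.mem_univ j) (Finset.mem_univ e0) hj
            (fun k _ hk => by rw [hXval0 j k hj hk.1 hk.2, mul_zero])]
          rw [hXval1 j hj, hXval2 j hj]
          linear_combination (-2*Complex.I) * hQP j + (2*Complex.I) * hQP e0
        simp [hsum]
      · simp only [if_neg hj']
        by_cases hjj : j' = j
        · subst hjj
          rw [hXval1 j' hj, hXval2 j' hj]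
          simp only [Complex.mul_re, Complex.mul_im, Complex.neg_re, Complex.neg_im,
            Complex.I_re, Complex.I_im, Complex.re_ofNat, Complex.im_ofNat]
          ring
        · rw [hXval0 j j' hj (Ne.symm (by exact fun h => hjj h.symm)) hj', hXval2 j hj]
          simp only [Complex.zero_re, Complex.zero_im, Complex.mul_re, Complex.mul_im,
            Complex.I_re, Complex.I_im, Complex.re_ofNat, Complex.im_ofNat]
          ring
  -- symplectic pairing of X j with u computes the derivative
  have hXB : ∀ (j : Fin n) (u : Fin n → ℂ),
      (∑ k, ((starRingEnd ℂ) (X j k) * u k).im) = fderiv ℝ F w u j := by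
    intro j u
    rw [hDval]
    by_cases hj : j = e0
    · subst hj
      simp only [if_pos rfl]
      by_cases he : Even n
      · simp only [if_pos he, Complex.re_sum]
        refine Finset.sum_congr rfl fun k _ => ?_
        simp only [hXdef, if_pos rfl, if_pos he, map_mul, map_neg, Complex.conj_I,
          RingHomCompTriple.comp_apply, RingHom.id_apply, Complex.mul_re, Complex.mul_im,
          Complex.neg_re, Complex.neg_im, Complex.I_re, Complex.I_im,
          Complex.conj_re, Complex.conj_im, Complex.conj_conj]
        ring
      · simp only [if_neg he, Complex.im_sum]
        refine Finset.sum_congr rfl fun k _ => ?_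
        simp only [hXdef, if_pos rfl, if_neg he, map_mul, map_one, Complex.conj_conj,
          Complex.mul_re, Complex.mul_im, Complex.one_re, Complex.one_im]
        ring
    · simp only [if_neg hj]
      rw [Finset.sum_eq_add_of_mem j e0 (Finset.mem_univ j) (Finset.mem_univ e0) hj
        (fun k _ hk => by rw [hXval0 j k hj hk.1 hk.2, map_zero, zero_mul, Complex.zero_im])]
      rw [hXval1 j hj, hXval2 j hj]
      simp only [map_mul, Complex.conj_I, map_neg, map_ofNat, Complex.mul_re, Complex.mul_im,
        Complex.neg_re, Complex.neg_im, Complex.I_re, Complex.I_im,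
        Complex.conj_re, Complex.conj_im, Complex.re_ofNat, Complex.im_ofNat]
      ring
  -- dimension count
  have hrank : Module.finrank ℝ (LinearMap.ker (fderiv ℝ F w : (Fin n → ℂ) →ₗ[ℝ] (Fin n → ℝ))) = n := by
    have h1 := LinearMap.finrank_range_add_finrank_ker
      ((fderiv ℝ F w) : (Fin n → ℂ) →ₗ[ℝ] (Fin n → ℝ))
    have h2 : LinearMap.range ((fderiv ℝ F w) : (Fin n → ℂ) →ₗ[ℝ] (Fin n → ℝ)) = ⊤ :=
      LinearMap.range_eq_top.2 hsurj
    have h3 : Module.finrank ℝ (Fin n → ℂ) = 2 * n := by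
      simp [Module.finrank_pi_fintype, Complex.finrank_real_complex, Finset.sum_const,
        Finset.card_univ, mul_comm]
    have h6 : Module.finrank ℝ
        (LinearMap.range ((fderiv ℝ F w) : (Fin n → ℂ) →ₗ[ℝ] (Fin n → ℝ))) = n := by
      rw [h2, finrank_top]
      simp
    have h7 : LinearMap.ker ((fderiv ℝ F w : (Fin n → ℂ) →ₗ[ℝ] (Fin n → ℝ)))
        = LinearMap.ker (fderiv ℝ F w : (Fin n → ℂ) →ₗ[ℝ] (Fin n → ℝ)) := rfl
    rw [h6, h3, h7] at h1
    omega
  refine ⟨hrank, fun u v hu hv => ?_⟩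
  -- u lies in the span of the X j
  have hXmem : ∀ j, X j ∈ LinearMap.ker (fderiv ℝ F w : (Fin n → ℂ) →ₗ[ℝ] (Fin n → ℝ)) := fun j =>
    LinearMap.mem_ker.2 (funext fun j' => hXker j j')
  have hlin : LinearIndependent ℝ X := by
    rw [Fintype.linearIndependent_iff]
    intro a ha j
    obtain ⟨u₀, hu₀⟩ := hsurj (Pi.single j 1)
    have h := symp_sum a X u₀
    rw [ha] at h
    simp only [Pi.zero_apply, map_zero, zero_mul, Complex.zero_im, Finset.sum_const_zero] at h
    have h2 : ∀ j', (∑ k, ((starRingEnd ℂ) (X j' k) * u₀ k).im) = (Pi.single j 1 : Fin n → ℝ) j' := by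
      intro j'; rw [hXB, hu₀]
    rw [Finset.sum_congr rfl (fun j' _ => by rw [h2 j'])] at h
    simpa [Pi.single_apply, mul_ite, Finset.sum_ite_eq'] using h.symm
  have hspan : Submodule.span ℝ (Set.range X) = LinearMap.ker (fderiv ℝ F w : (Fin n → ℂ) →ₗ[ℝ] (Fin n → ℝ)) := by
    apply Submodule.eq_of_le_of_finrank_le
    · rw [Submodule.span_le]
      rintro _ ⟨j, rfl⟩
      exact hXmem j
    · rw [hrank, finrank_span_eq_card hlin, Fintype.card_fin]
  have humem : u ∈ Submodule.span ℝ (Set.range X) := by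
    rw [hspan]; exact LinearMap.mem_ker.2 hu
  obtain ⟨a, ha⟩ := (Submodule.mem_span_range_iff_exists_fun ℝ).1 humem
  calc ∑ k, ((starRingEnd ℂ) (u k) * v k).im
      = ∑ j, a j * ∑ k, ((starRingEnd ℂ) (X j k) * v k).im := by
        rw [← ha, symp_sum]
    _ = ∑ j, a j * (fderiv ℝ F w v j) := by
        refine Finset.sum_congr rfl fun j _ => by rw [hXB]
    _ = 0 := by simp [hv]
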